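/- Let N ≥ 1, let v : {0, …, N−1} → ℝ be nonnegative and not identically zero, let f = Σ_{n=0}^{N−1} v_n 1_{[n,n+1)}, and for each integer j with 0 ≤ j ≤ 2N set L_j = Σ_{n=max(0, j−N)}^{min(j−1, N−1)} v_n v_{j−n−1}. Then ‖f ∗ f‖²_{L²(ℝ)} / (‖f ∗ f‖_{L^∞(ℝ)} ‖f ∗ f‖_{L¹(ℝ)}) = ((1/3) Σ_{j=0}^{2N−1} (L_j² + L_j L_{j+1} + L_{j+1}²)) / ((max_{0 ≤ j ≤ 2N−1} L_j) · (Σ_{n=0}^{N−1} v_n)²). -/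

import Mathlib

open MeasureTheory intervalIntegral
open scoped ENNReal NNReal

/-- The autoconvolution of `f`: `(f ∗ f)(x) = ∫ f(t) f(x - t) dt`. -/
noncomputable def autoconv (f : ℝ → ℝ) : ℝ → ℝ := fun x => ∫ t, f t * f (x - t)

/-- The step function `f = Σ_{n=0}^{N-1} v_n 1_{[n, n+1)}`. -/
noncomputable def stepFun (N : ℕ) (v : Fin N → ℝ) : ℝ → ℝ :=
  fun x => ∑ n : Fin N, v n * (Set.Ico ((n : ℕ) : ℝ) ((n : ℕ) + 1)).indicator 1 x



noncomputable def tri (y : ℝ) : ℝ := max 0 (min y (2 - y))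

lemma tri_nonneg (y : ℝ) : 0 ≤ tri y := le_max_left _ _

lemma tri_continuous : Continuous tri := by
  unfold tri
  exact continuous_const.max ((continuous_id).min (by continuity))

lemma tri_of_le_zero {y : ℝ} (h : y ≤ 0) : tri y = 0 := by
  unfold tri
  rw [max_eq_left]
  exact le_trans (min_le_left _ _) h

lemma tri_of_ge_two {y : ℝ} (h : 2 ≤ y) : tri y = 0 := by
  unfold tri
  rw [max_eq_left]
  exact le_trans (min_le_right _ _) (by linarith)

lemma tri_of_mem_left {y : ℝ} (h0 : 0 ≤ y) (h1 : y ≤ 1) : tri y = y := by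
  unfold tri
  rw [min_eq_left (by linarith), max_eq_right h0]

lemma tri_of_mem_right {y : ℝ} (h0 : 1 ≤ y) (h1 : y ≤ 2) : tri y = 2 - y := by
  unfold tri
  rw [min_eq_right (by linarith), max_eq_right (by linarith)]

lemma indicator_shift (b x t : ℝ) :
    (Set.Ico b (b+1)).indicator (1 : ℝ → ℝ) (x - t)
      = (Set.Ioc (x-b-1) (x-b)).indicator 1 t := by
  by_cases h : x - t ∈ Set.Ico b (b+1)
  · have h' := h
    simp only [Set.mem_Ico] at h'
    have hm : t ∈ Set.Ioc (x-b-1) (x-b) := ⟨by linarith [h'.2], by linarith [h'.1]⟩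
    rw [Set.indicator_of_mem h, Set.indicator_of_mem hm]
    rfl
  · rw [Set.indicator_of_notMem h, Set.indicator_of_notMem]
    simp only [Set.mem_Ico, not_and, not_lt] at h
    simp only [Set.mem_Ioc, not_and, not_le]
    intro h1
    by_contra h2
    push_neg at h2
    exact absurd (h (by linarith)) (by push_neg; linarith)

lemma ind_prod_eq (a b x t : ℝ) :
    (Set.Ico a (a+1)).indicator (1 : ℝ → ℝ) t * (Set.Ico b (b+1)).indicator 1 (x - t)
      = (Set.Ico a (a+1) ∩ Set.Ioc (x-b-1) (x-b)).indicator 1 t := by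
  rw [indicator_shift, Set.inter_indicator_one]; rfl

lemma volume_inter (a c : ℝ) :
    volume (Set.Ico a (a+1) ∩ Set.Ioc c (c+1)) = ENNReal.ofReal (min (a+1) (c+1) - max a c) := by
  apply le_antisymm
  · calc volume (Set.Ico a (a+1) ∩ Set.Ioc c (c+1)) ≤ volume (Set.Icc (max a c) (min (a+1) (c+1))) := by
          apply measure_mono
          rintro t ⟨⟨h1, h2⟩, h3, h4⟩
          exact ⟨max_le h1 h3.le, le_min h2.le h4⟩
      _ = ENNReal.ofReal (min (a+1) (c+1) - max a c) := Real.volume_Icc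
  · calc ENNReal.ofReal (min (a+1) (c+1) - max a c) = volume (Set.Ioo (max a c) (min (a+1) (c+1))) := Real.volume_Ioo.symm
      _ ≤ volume (Set.Ico a (a+1) ∩ Set.Ioc c (c+1)) := by
          apply measure_mono
          rintro t ⟨h1, h2⟩
          obtain ⟨ha, hc⟩ := max_lt_iff.mp h1
          obtain ⟨ha', hc'⟩ := lt_min_iff.mp h2
          exact ⟨⟨ha.le, ha'⟩, hc, hc'.le⟩

lemma integral_ind_prod (a b x : ℝ) :
    ∫ t, (Set.Ico a (a+1)).indicator (1 : ℝ → ℝ) t * (Set.Ico b (b+1)).indicator 1 (x - t)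
      = tri (x - a - b) := by
  simp only [ind_prod_eq]
  rw [integral_indicator_one (measurableSet_Ico.inter measurableSet_Ioc)]
  have hv : Set.Ioc (x-b-1) (x-b) = Set.Ioc (x-b-1) ((x-b-1)+1) := by norm_num
  rw [hv, measureReal_def, volume_inter, ENNReal.toReal_ofReal']
  rcases le_total (x - a - b) 1 with h | h
  · have h1 : min (a+1) (x-b-1+1) = x - b := by rw [min_eq_right (by linarith)]; ring
    have h2 : max a (x-b-1) = a := max_eq_left (by linarith)
    have h3 : tri (x - a - b) = max 0 (x - a - b) := by
      unfold tri; rw [min_eq_left (by linarith)]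
    rw [h1, h2, h3, max_comm]
    ring_nf
  · have h1 : min (a+1) (x-b-1+1) = a + 1 := min_eq_left (by linarith)
    have h2 : max a (x-b-1) = x - b - 1 := max_eq_right (by linarith)
    have h3 : tri (x - a - b) = max 0 (2 - (x - a - b)) := by
      unfold tri; rw [min_eq_right (by linarith)]
    rw [h1, h2, h3, max_comm]
    ring_nf


lemma integrable_ind_prod (a b x : ℝ) :
    Integrable (fun t => (Set.Ico a (a+1)).indicator (1 : ℝ → ℝ) t
      * (Set.Ico b (b+1)).indicator 1 (x - t)) := by
  simp only [ind_prod_eq]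
  rw [integrable_indicator_iff (measurableSet_Ico.inter measurableSet_Ioc)]
  refine (integrableOn_const_iff).mpr (Or.inr ?_)
  calc volume (Set.Ico a (a+1) ∩ Set.Ioc (x-b-1) (x-b)) ≤ volume (Set.Ico a (a+1)) :=
        measure_mono Set.inter_subset_left
    _ < ⊤ := by rw [Real.volume_Ico]; exact ENNReal.ofReal_lt_top

lemma autoconv_stepFun_eq (N : ℕ) (v : Fin N → ℝ) (x : ℝ) :
    autoconv (stepFun N v) x
      = ∑ n : Fin N, ∑ m : Fin N, v n * v m * tri (x - (n : ℕ) - (m : ℕ)) := by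
  unfold autoconv stepFun
  have hre : ∀ t : ℝ,
      (∑ n : Fin N, v n * (Set.Ico ((n : ℕ) : ℝ) ((n : ℕ) + 1)).indicator 1 t) *
      (∑ m : Fin N, v m * (Set.Ico ((m : ℕ) : ℝ) ((m : ℕ) + 1)).indicator 1 (x - t)) =
      ∑ n : Fin N, ∑ m : Fin N, (v n * v m) *
        ((Set.Ico ((n : ℕ) : ℝ) ((n : ℕ) + 1)).indicator 1 t *
         (Set.Ico ((m : ℕ) : ℝ) ((m : ℕ) + 1)).indicator 1 (x - t)) := by
    intro t
    rw [Finset.sum_mul_sum]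
    exact Finset.sum_congr rfl fun n _ => Finset.sum_congr rfl fun m _ => by ring
  simp only [hre]
  rw [MeasureTheory.integral_finset_sum]
  · refine Finset.sum_congr rfl fun n _ => ?_
    rw [MeasureTheory.integral_finset_sum]
    · refine Finset.sum_congr rfl fun m _ => ?_
      rw [MeasureTheory.integral_const_mul, integral_ind_prod]
    · exact fun m _ => ((integrable_ind_prod _ _ x).const_mul _)
  · exact fun n _ => integrable_finset_sum _ fun m _ => ((integrable_ind_prod _ _ x).const_mul _)


lemma sum_tri_eq (N : ℕ) (v : Fin N → ℝ) (L : ℕ → ℝ)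
    (hL : ∀ j, L j =
      ∑ n : Fin N, ∑ m : Fin N, if (n : ℕ) + (m : ℕ) + 1 = j then v n * v m else 0)
    (j : ℕ) (x : ℝ) (hx1 : (j:ℝ) ≤ x) (hx2 : x < j+1) :
    ∑ n : Fin N, ∑ m : Fin N, v n * v m * tri (x - (n : ℕ) - (m : ℕ))
      = (1-(x-(j:ℝ))) * L j + (x-(j:ℝ)) * L (j+1) := by
  rw [hL j, hL (j+1), Finset.mul_sum, Finset.mul_sum, ← Finset.sum_add_distrib]
  refine Finset.sum_congr rfl fun n _ => ?_
  rw [Finset.mul_sum, Finset.mul_sum, ← Finset.sum_add_distrib]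
  refine Finset.sum_congr rfl fun m _ => ?_
  by_cases h1 : (n : ℕ) + (m : ℕ) + 1 = j
  · have h2 : ¬ ((n : ℕ) + (m : ℕ) + 1 = j + 1) := by omega
    have hc : ((n:ℕ):ℝ) + ((m:ℕ):ℝ) + 1 = (j:ℝ) := by exact_mod_cast congrArg (Nat.cast : ℕ → ℝ) h1
    rw [if_pos h1, if_neg h2, tri_of_mem_right (by linarith) (by linarith)]
    linear_combination (v n * v m) * hc
  · by_cases h2 : (n : ℕ) + (m : ℕ) + 1 = j + 1
    · have hc : ((n:ℕ):ℝ) + ((m:ℕ):ℝ) + 1 = (j:ℝ) + 1 := by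
        exact_mod_cast congrArg (Nat.cast : ℕ → ℝ) h2
      rw [if_pos h2, if_neg h1, tri_of_mem_left (by linarith) (by linarith)]
      linear_combination (-(v n * v m)) * hc
    · rw [if_neg h1, if_neg h2]
      have htri : tri (x - (n:ℕ) - (m:ℕ)) = 0 := by
        rcases (by omega : (n:ℕ) + (m:ℕ) + 2 ≤ j ∨ j + 1 ≤ (n:ℕ) + (m:ℕ)) with h | h
        · have hc : ((n:ℕ):ℝ) + ((m:ℕ):ℝ) + 2 ≤ (j:ℝ) := by exact_mod_cast Nat.cast_le.mpr h
          exact tri_of_ge_two (by linarith)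
        · have hc : (j:ℝ) + 1 ≤ ((n:ℕ):ℝ) + ((m:ℕ):ℝ) := by exact_mod_cast Nat.cast_le.mpr h
          exact tri_of_le_zero (by linarith)
      rw [htri]
      ring

lemma sum_tri_zero_left (N : ℕ) (v : Fin N → ℝ) (x : ℝ) (hx : x ≤ 0) :
    ∑ n : Fin N, ∑ m : Fin N, v n * v m * tri (x - (n : ℕ) - (m : ℕ)) = 0 := by
  refine Finset.sum_eq_zero fun n _ => Finset.sum_eq_zero fun m _ => ?_
  rw [tri_of_le_zero (by
    have h1 : (0:ℝ) ≤ ((n:ℕ):ℝ) := Nat.cast_nonneg _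
    have h2 : (0:ℝ) ≤ ((m:ℕ):ℝ) := Nat.cast_nonneg _
    linarith)]
  ring

lemma sum_tri_zero_right (N : ℕ) (v : Fin N → ℝ) (x : ℝ) (hx : (2*N : ℝ) ≤ x) :
    ∑ n : Fin N, ∑ m : Fin N, v n * v m * tri (x - (n : ℕ) - (m : ℕ)) = 0 := by
  refine Finset.sum_eq_zero fun n _ => Finset.sum_eq_zero fun m _ => ?_
  rw [tri_of_ge_two (by
    have hn : ((n:ℕ):ℝ) + 1 ≤ (N:ℝ) := by exact_mod_cast Nat.cast_le.mpr n.isLt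
    have hm : ((m:ℕ):ℝ) + 1 ≤ (N:ℝ) := by exact_mod_cast Nat.cast_le.mpr m.isLt
    linarith)]
  ring



lemma my_eLpNorm_one (g : ℝ → ℝ) (hInt : Integrable g) (hnn : ∀ x, 0 ≤ g x) :
    eLpNorm g 1 volume = ENNReal.ofReal (∫ x, g x) := by
  rw [eLpNorm_one_eq_lintegral_enorm,
    ofReal_integral_eq_lintegral_ofReal hInt (ae_of_all _ hnn)]
  exact lintegral_congr fun x => Real.enorm_eq_ofReal (hnn x)

lemma my_eLpNorm_two_sq (g : ℝ → ℝ) (hInt : Integrable (fun x => g x ^ 2))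
    (hnn : ∀ x, 0 ≤ g x) :
    eLpNorm g 2 volume ^ 2 = ENNReal.ofReal (∫ x, g x ^ 2) := by
  rw [eLpNorm_eq_lintegral_rpow_enorm_toReal (by norm_num) (by norm_num)]
  have h2 : (2:ℝ≥0∞).toReal = (2:ℝ) := by norm_num
  rw [h2]
  have h1 : ∀ x : ℝ, ‖g x‖ₑ ^ (2:ℝ) = ENNReal.ofReal (g x ^ 2) := by
    intro x
    rw [Real.enorm_eq_ofReal (hnn x), ENNReal.ofReal_rpow_of_nonneg (hnn x) (by norm_num)]
    congr 1
    rw [show (2:ℝ) = ((2:ℕ):ℝ) by norm_num, Real.rpow_natCast]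
  rw [lintegral_congr h1, ofReal_integral_eq_lintegral_ofReal hInt
    (ae_of_all _ fun x => sq_nonneg _)]
  rw [← ENNReal.rpow_natCast _ 2, ← ENNReal.rpow_mul]
  norm_num

lemma my_eLpNorm_top (g : ℝ → ℝ) (hcont : Continuous g) (hnn : ∀ x, 0 ≤ g x)
    (M : ℝ) (hub : ∀ x, g x ≤ M) (x0 : ℝ) (hx0 : g x0 = M) :
    eLpNorm g ⊤ volume = ENNReal.ofReal M := by
  rw [eLpNorm_exponent_top]
  have hM0 : 0 ≤ M := le_trans (hnn x0) (le_of_eq hx0)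
  apply le_antisymm
  · exact eLpNormEssSup_le_of_ae_bound (C := M) (ae_of_all _ fun x => by
      rw [Real.norm_eq_abs, abs_of_nonneg (hnn x)]; exact hub x)
  · by_contra hlt
    push_neg at hlt
    set c := (eLpNormEssSup g volume).toReal with hc
    have hfin : eLpNormEssSup g volume ≠ ⊤ := hlt.ne_top
    have hcM : c < M := by
      have h := (ENNReal.toReal_lt_toReal hfin ENNReal.ofReal_ne_top).mpr hlt
      rwa [ENNReal.toReal_ofReal hM0] at h
    have hae : ∀ᵐ x ∂(volume : Measure ℝ), g x ≤ c := by
      filter_upwards [ae_le_eLpNormEssSup (f := g) (μ := volume)] with x hx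
      rw [← ENNReal.ofReal_toReal hfin, Real.enorm_eq_ofReal_abs,
        abs_of_nonneg (hnn x)] at hx
      exact (ENNReal.ofReal_le_ofReal_iff ENNReal.toReal_nonneg).mp hx
    have hU : IsOpen {x : ℝ | c < g x} := isOpen_lt continuous_const hcont
    have hpos : (0:ℝ≥0∞) < volume {x : ℝ | c < g x} :=
      hU.measure_pos volume ⟨x0, by simpa [hx0] using hcM⟩
    have hzero : volume {x : ℝ | c < g x} = 0 := by
      have := ae_iff.mp hae
      simpa [not_le] using this
    rw [hzero] at hpos
    exact lt_irrefl _ hpos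



lemma int01_linear (A B : ℝ) : ∫ t in (0:ℝ)..1, ((1-t)*A + t*B) = (A+B)/2 := by
  have h : ∀ t:ℝ, (1-t)*A + t*B = A + (B-A)*t := fun t => by ring
  simp only [h]
  rw [integral_add (g := fun t => (B-A)*t) intervalIntegrable_const
      ((continuous_const.mul continuous_id').intervalIntegrable _ _),
    intervalIntegral.integral_const, intervalIntegral.integral_const_mul, integral_id]
  norm_num
  ring

lemma int01_sq (A B : ℝ) : ∫ t in (0:ℝ)..1, ((1-t)*A + t*B)^2 = (A^2+A*B+B^2)/3 := by
  have h : ∀ t:ℝ, ((1-t)*A + t*B)^2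
      = A^2 + (2*A*B - 2*A^2)*t + (A^2 - 2*A*B + B^2)*t^2 := fun t => by ring
  simp only [h]
  rw [integral_add (g := fun t => (A^2 - 2*A*B + B^2)*t^2) (by
      apply IntervalIntegrable.add intervalIntegrable_const
      exact (continuous_const.mul continuous_id').intervalIntegrable _ _)
      ((continuous_const.mul (continuous_pow 2)).intervalIntegrable _ _),
    integral_add (g := fun t => (2*A*B - 2*A^2)*t) intervalIntegrable_const
      ((continuous_const.mul continuous_id').intervalIntegrable _ _),
    intervalIntegral.integral_const, intervalIntegral.integral_const_mul, intervalIntegral.integral_const_mul, integral_id, integral_pow]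
  norm_num
  ring

lemma int_piece_linear (A B j : ℝ) :
    ∫ x in j..(j+1), ((1-(x-j))*A + (x-j)*B) = (A+B)/2 := by
  have := integral_comp_sub_right (a := j) (b := j+1) (fun t => (1-t)*A + t*B) j
  rw [this, show j - j = (0:ℝ) by ring, show j + 1 - j = (1:ℝ) by ring, int01_linear]

lemma int_piece_sq (A B j : ℝ) :
    ∫ x in j..(j+1), ((1-(x-j))*A + (x-j)*B)^2 = (A^2+A*B+B^2)/3 := by
  have := integral_comp_sub_right (a := j) (b := j+1) (fun t => ((1-t)*A + t*B)^2) j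
  rw [this, show j - j = (0:ℝ) by ring, show j + 1 - j = (1:ℝ) by ring, int01_sq]



/-- For a nonnegative, not identically zero step function `f = Σ v_n 1_{[n,n+1)}`,
the autoconvolution Hölder ratio equals the explicit discrete expression in the
autocorrelation numbers `L_j`. -/
theorem holder_ratio_stepFun_eq_discrete (N : ℕ) (hN : 1 ≤ N) (v : Fin N → ℝ)
    (hv : ∀ n, 0 ≤ v n) (hne : ∃ n, v n ≠ 0) (L : ℕ → ℝ)
    (hL : ∀ j, L j =
      ∑ n : Fin N, ∑ m : Fin N, if (n : ℕ) + (m : ℕ) + 1 = j then v n * v m else 0) :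
    (eLpNorm (autoconv (stepFun N v)) 2 volume) ^ 2 /
      (eLpNorm (autoconv (stepFun N v)) ⊤ volume *
        eLpNorm (autoconv (stepFun N v)) 1 volume) =
    ENNReal.ofReal
      (((1 / 3) * ∑ j ∈ Finset.range (2 * N),
          (L j ^ 2 + L j * L (j + 1) + L (j + 1) ^ 2)) /
        (((Finset.range (2 * N)).sup' (Finset.nonempty_range_iff.mpr (by omega)) L) *
          (∑ n : Fin N, v n) ^ 2)) := by
  set g := autoconv (stepFun N v) with hgdef
  have hgx : ∀ x, g x = ∑ n : Fin N, ∑ m : Fin N, v n * v m * tri (x - (n:ℕ) - (m:ℕ)) :=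
    fun x => autoconv_stepFun_eq N v x
  have hgfun : g = fun x => ∑ n : Fin N, ∑ m : Fin N, v n * v m * tri (x - (n:ℕ) - (m:ℕ)) :=
    funext hgx
  have hgcont : Continuous g := by
    rw [hgfun]
    refine continuous_finset_sum _ fun n _ => continuous_finset_sum _ fun m _ => ?_
    exact continuous_const.mul (tri_continuous.comp (by continuity))
  have hgnn : ∀ x, 0 ≤ g x := by
    intro x
    rw [hgx]
    exact Finset.sum_nonneg fun n _ => Finset.sum_nonneg fun m _ =>
      mul_nonneg (mul_nonneg (hv n) (hv m)) (tri_nonneg _)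
  have hzero : ∀ x : ℝ, x ≤ 0 ∨ (2*(N:ℝ)) ≤ x → g x = 0 := by
    rintro x (h | h)
    · rw [hgx]; exact sum_tri_zero_left N v x h
    · rw [hgx]; exact sum_tri_zero_right N v x (by push_cast; linarith)
  -- L facts
  have hLnn : ∀ j, 0 ≤ L j := by
    intro j
    rw [hL]
    exact Finset.sum_nonneg fun n _ => Finset.sum_nonneg fun m _ => by
      split
      · exact mul_nonneg (hv n) (hv m)
      · exact le_rfl
  have hL0 : L 0 = 0 := by
    rw [hL]
    exact Finset.sum_eq_zero fun n _ => Finset.sum_eq_zero fun m _ => if_neg (by omega)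
  have hL2N : L (2*N) = 0 := by
    rw [hL]
    refine Finset.sum_eq_zero fun n _ => Finset.sum_eq_zero fun m _ => if_neg ?_
    have := n.isLt; have := m.isLt; omega
  -- value formula on closed intervals
  have hval : ∀ (j : ℕ) (x : ℝ), (j:ℝ) ≤ x → x ≤ (j:ℝ)+1 →
      g x = (1-(x-(j:ℝ))) * L j + (x-(j:ℝ)) * L (j+1) := by
    intro j x h1 h2
    rcases lt_or_eq_of_le h2 with h2' | h2'
    · rw [hgx]; exact sum_tri_eq N v L hL j x h1 h2'
    · rw [hgx, sum_tri_eq N v L hL (j+1) x (by push_cast; linarith) (by push_cast; linarith)]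
      push_cast
      rw [h2']
      ring
  have hgint : ∀ j : ℕ, g (j:ℝ) = L j := by
    intro j
    rw [hval j (j:ℝ) le_rfl (by linarith)]
    ring
  -- M
  set M := (Finset.range (2 * N)).sup' (Finset.nonempty_range_iff.mpr (by omega)) L with hM
  have hMle : ∀ j, j < 2*N → L j ≤ M := fun j hj => Finset.le_sup' L (Finset.mem_range.mpr hj)
  have hMle' : ∀ j, j ≤ 2*N → L j ≤ M := by
    intro j hj
    rcases lt_or_eq_of_le hj with h | h
    · exact hMle j h
    · rw [h, hL2N]
      exact le_trans (hLnn 0) (hMle 0 (by omega))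
  obtain ⟨j0, hj0mem, hj0⟩ := Finset.exists_mem_eq_sup' (Finset.nonempty_range_iff.mpr
    (by omega : 2*N ≠ 0)) L
  obtain ⟨n0, hn0⟩ := hne
  have hvn0 : 0 < v n0 := lt_of_le_of_ne (hv n0) (Ne.symm hn0)
  have hMpos : 0 < M := by
    have h1 : 0 < L (2*(n0:ℕ)+1) := by
      rw [hL]
      refine Finset.sum_pos' (fun n _ => Finset.sum_nonneg fun m _ => by
        split
        · exact mul_nonneg (hv n) (hv m)
        · exact le_rfl) ⟨n0, Finset.mem_univ _, ?_⟩
      refine Finset.sum_pos' (fun m _ => by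
        split
        · exact mul_nonneg (hv n0) (hv m)
        · exact le_rfl) ⟨n0, Finset.mem_univ _, ?_⟩
      rw [if_pos (by omega)]
      exact mul_pos hvn0 hvn0
    exact lt_of_lt_of_le h1 (hMle _ (by have := n0.isLt; omega))
  have hub : ∀ x, g x ≤ M := by
    intro x
    rcases le_or_gt x 0 with h0 | h0
    · rw [hzero x (Or.inl h0)]; exact hMpos.le
    rcases le_or_gt (2*(N:ℝ)) x with h1 | h1
    · rw [hzero x (Or.inr h1)]; exact hMpos.le
    · set j := ⌊x⌋₊ with hj
      have hf1 : (j:ℝ) ≤ x := Nat.floor_le h0.le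
      have hf2 : x < (j:ℝ)+1 := Nat.lt_floor_add_one x
      have hjlt : j < 2*N := by
        rw [hj, Nat.floor_lt h0.le]
        push_cast
        linarith
      rw [hval j x hf1 hf2.le]
      have hA := hMle j hjlt
      have hB := hMle' (j+1) (by omega)
      nlinarith [hf1, hf2, hA, hB]
  have hgj0 : g ((j0:ℕ):ℝ) = M := by rw [hgint j0]; exact hj0.symm
  -- integrability
  have hsupp : HasCompactSupport g := by
    refine HasCompactSupport.intro (isCompact_Icc (a := (0:ℝ)) (b := 2*(N:ℝ))) ?_
    intro x hx
    simp only [Set.mem_Icc, not_and, not_le] at hx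
    rcases le_or_gt x 0 with h | h
    · exact hzero x (Or.inl h)
    · exact hzero x (Or.inr (hx h.le).le)
  have hInt : Integrable g := hgcont.integrable_of_hasCompactSupport hsupp
  have hsupp2 : HasCompactSupport (fun x => g x ^ 2) := by
    refine HasCompactSupport.intro (isCompact_Icc (a := (0:ℝ)) (b := 2*(N:ℝ))) ?_
    intro x hx
    simp only [Set.mem_Icc, not_and, not_le] at hx
    rcases le_or_gt x 0 with h | h
    · rw [hzero x (Or.inl h)]; ring
    · rw [hzero x (Or.inr (hx h.le).le)]; ring
  have hInt2 : Integrable (fun x => g x ^ 2) :=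
    (hgcont.pow 2).integrable_of_hasCompactSupport hsupp2
  -- integral of g
  have hsplit : ∀ F : ℝ → ℝ, Continuous F → (∀ x ∉ Set.Ioc (0:ℝ) (2*(N:ℝ)), F x = 0) →
      ∫ x, F x = ∑ j ∈ Finset.range (2*N), ∫ x in ((j:ℕ):ℝ)..(((j+1:ℕ)):ℝ), F x := by
    intro F hF hFz
    rw [← setIntegral_eq_integral_of_forall_compl_eq_zero hFz,
      ← intervalIntegral.integral_of_le (by positivity : (0:ℝ) ≤ 2*(N:ℝ))]
    have hadj := intervalIntegral.sum_integral_adjacent_intervals (μ := volume)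
      (a := fun k : ℕ => (k:ℝ)) (n := 2*N) (fun k _ => hF.intervalIntegrable _ _)
    rw [show ((0:ℕ):ℝ) = 0 by norm_num, show ((2*N:ℕ):ℝ) = 2*(N:ℝ) by push_cast; ring] at hadj
    rw [← hadj]
  have hIocz : ∀ x ∉ Set.Ioc (0:ℝ) (2*(N:ℝ)), g x = 0 := by
    intro x hx
    simp only [Set.mem_Ioc, not_and, not_le] at hx
    rcases le_or_gt x 0 with h | h
    · exact hzero x (Or.inl h)
    · exact hzero x (Or.inr (hx h).le)
  have hI1 : ∫ x, g x = ∑ j ∈ Finset.range (2*N), (L j + L (j+1))/2 := by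
    rw [hsplit g hgcont hIocz]
    refine Finset.sum_congr rfl fun j hj => ?_
    rw [show (((j+1:ℕ)):ℝ) = (j:ℝ)+1 by push_cast; ring]
    rw [intervalIntegral.integral_congr (g := fun x => (1-(x-(j:ℝ)))*L j + (x-(j:ℝ))*L (j+1))
      (fun x hx => by
        rw [Set.uIcc_of_le (by linarith)] at hx
        exact hval j x hx.1 hx.2)]
    exact int_piece_linear (L j) (L (j+1)) (j:ℝ)
  have hI2 : ∫ x, g x ^ 2 = ∑ j ∈ Finset.range (2*N),
      (L j^2 + L j * L (j+1) + L (j+1)^2)/3 := by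
    rw [hsplit (fun x => g x ^ 2) (hgcont.pow 2) (fun x hx => by simp only [hIocz x hx]; ring)]
    refine Finset.sum_congr rfl fun j hj => ?_
    rw [show (((j+1:ℕ)):ℝ) = (j:ℝ)+1 by push_cast; ring]
    rw [intervalIntegral.integral_congr
      (g := fun x => ((1-(x-(j:ℝ)))*L j + (x-(j:ℝ))*L (j+1))^2)
      (fun x hx => by
        rw [Set.uIcc_of_le (by linarith)] at hx
        rw [hval j x hx.1 hx.2])]
    exact int_piece_sq (L j) (L (j+1)) (j:ℝ)
  -- sum identities
  have hSum : ∑ j ∈ Finset.range (2*N+1), L j = (∑ n : Fin N, v n)^2 := by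
    have h1 : ∀ j ∈ Finset.range (2*N+1), L j =
        ∑ n : Fin N, ∑ m : Fin N, if (n:ℕ)+(m:ℕ)+1 = j then v n * v m else 0 :=
      fun j _ => hL j
    rw [Finset.sum_congr rfl h1, Finset.sum_comm]
    have h2 : ∀ n : Fin N,
        ∑ j ∈ Finset.range (2*N+1), ∑ m : Fin N,
          (if (n:ℕ)+(m:ℕ)+1 = j then v n * v m else 0)
        = ∑ m : Fin N, v n * v m := by
      intro n
      rw [Finset.sum_comm]
      refine Finset.sum_congr rfl fun m _ => ?_
      rw [Finset.sum_ite_eq (Finset.range (2*N+1)) ((n:ℕ)+(m:ℕ)+1) (fun _ => v n * v m)]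
      rw [if_pos (Finset.mem_range.mpr (by have := n.isLt; have := m.isLt; omega))]
    rw [Finset.sum_congr rfl fun n _ => h2 n, sq, Finset.sum_mul_sum]
  have hS1 : ∑ j ∈ Finset.range (2*N), (L j + L (j+1))/2 = (∑ n : Fin N, v n)^2 := by
    have e1 : ∑ j ∈ Finset.range (2*N+1), L j = (∑ j ∈ Finset.range (2*N), L j) + L (2*N) :=
      Finset.sum_range_succ L (2*N)
    have e2 : ∑ j ∈ Finset.range (2*N+1), L j
        = (∑ j ∈ Finset.range (2*N), L (j+1)) + L 0 := Finset.sum_range_succ' L (2*N)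
    have h3 : ∀ j : ℕ, (L j + L (j+1))/2 = (1/2) * L j + (1/2) * L (j+1) := fun j => by ring
    simp only [h3]
    rw [Finset.sum_add_distrib, ← Finset.mul_sum, ← Finset.mul_sum]
    rw [hSum] at e1 e2
    rw [hL0] at e2
    rw [hL2N] at e1
    nlinarith [e1, e2]
  -- final assembly
  have hSpos : 0 < ∑ n : Fin N, v n :=
    Finset.sum_pos' (fun i _ => hv i) ⟨n0, Finset.mem_univ n0, hvn0⟩
  rw [my_eLpNorm_two_sq g hInt2 hgnn, my_eLpNorm_one g hInt hgnn,
    my_eLpNorm_top g hgcont hgnn M hub ((j0:ℕ):ℝ) hgj0, hI2, hI1, hS1]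
  have hnum : ∑ j ∈ Finset.range (2*N), (L j^2 + L j * L (j+1) + L (j+1)^2)/3
      = (1/3) * ∑ j ∈ Finset.range (2*N), (L j^2 + L j * L (j+1) + L (j+1)^2) := by
    rw [Finset.mul_sum]
    exact Finset.sum_congr rfl fun j _ => by ring
  rw [hnum, ← ENNReal.ofReal_mul hMpos.le,
    ← ENNReal.ofReal_div_of_pos (by positivity : (0:ℝ) < M * (∑ n : Fin N, v n)^2)]
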